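/- Let K = C + cone(R) where C ⊆ ℝ^n is compact convex and R is a finite set of vectors (so K is Motzkin-decomposable with polyhedral recession cone), and let F = {x ∈ K : π·x = σ_K(π)} be a nonempty face of K given by the supporting hyperplane π·x = σ_K(π) with σ_K(π) < ∞. For δ > 0 let F_δ := {x ∈ K : ∃ x' ∈ F, ‖x − x'‖ ≤ δ}. Then there exists ε > 0 such that for all π' with ‖π' − π‖ < ε, σ_K(π') = σ_{F_δ}(π'). -/

import Mathlib

open Pointwise
open scoped RealInnerProductSpace

/-- The conical hull of a set: all finite nonnegative combinations. -/
def conicalHull {E : Type*} [AddCommMonoid E] [Module ℝ E] (s : Set E) : Set E :=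
  {x | ∃ (k : ℕ) (c : Fin k → ℝ) (v : Fin k → E),
    (∀ i, 0 ≤ c i) ∧ (∀ i, v i ∈ s) ∧ x = ∑ i, c i • v i}

/-- The support function of a set, with values in `EReal`. -/
noncomputable def suppFn {n : ℕ} (c : EuclideanSpace ℝ (Fin n))
    (S : Set (EuclideanSpace ℝ (Fin n))) : EReal :=
  sSup ((fun x => ((⟪c, x⟫ : ℝ) : EReal)) '' S)

variable {n : ℕ}

lemma suppFn_mono (c : EuclideanSpace ℝ (Fin n)) {S T : Set (EuclideanSpace ℝ (Fin n))}
    (h : S ⊆ T) : suppFn c S ≤ suppFn c T :=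
  sSup_le_sSup (Set.image_mono h)

lemma le_suppFn (c : EuclideanSpace ℝ (Fin n)) {S : Set (EuclideanSpace ℝ (Fin n))} {x}
    (h : x ∈ S) : ((⟪c, x⟫ : ℝ) : EReal) ≤ suppFn c S :=
  le_sSup (Set.mem_image_of_mem _ h)

lemma suppFn_le_iff (c : EuclideanSpace ℝ (Fin n)) (S : Set (EuclideanSpace ℝ (Fin n)))
    (y : EReal) : suppFn c S ≤ y ↔ ∀ x ∈ S, ((⟪c, x⟫ : ℝ) : EReal) ≤ y := by
  simp [suppFn, sSup_le_iff, Set.forall_mem_image]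

lemma suppFn_eq_top (c : EuclideanSpace ℝ (Fin n)) (S : Set (EuclideanSpace ℝ (Fin n)))
    (h : ∀ M : ℝ, ∃ x ∈ S, M < ⟪c, x⟫) : suppFn c S = ⊤ := by
  rw [suppFn, sSup_eq_top]
  intro b hb
  induction b with
  | bot => obtain ⟨x, hx, _⟩ := h 0; exact ⟨_, Set.mem_image_of_mem _ hx, by simp⟩
  | coe b =>
    obtain ⟨x, hx, hx2⟩ := h b
    exact ⟨_, Set.mem_image_of_mem _ hx, by exact_mod_cast hx2⟩
  | top => exact absurd hb (lt_irrefl _)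

lemma zero_mem_conicalHull {E : Type*} [AddCommMonoid E] [Module ℝ E] (s : Set E) :
    (0 : E) ∈ conicalHull s :=
  ⟨0, fun i => 0, fun i => i.elim0, fun i => le_rfl, fun i => i.elim0, by simp⟩

lemma add_smul_mem_conicalHull {E : Type*} [AddCommMonoid E] [Module ℝ E] {s : Set E}
    {x r : E} {t : ℝ} (hx : x ∈ conicalHull s) (hr : r ∈ s) (ht : 0 ≤ t) :
    x + t • r ∈ conicalHull s := by
  obtain ⟨k, c, v, hc, hv, hsum⟩ := hx
  refine ⟨k + 1, Fin.snoc c t, Fin.snoc v r, ?_, ?_, ?_⟩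
  · intro i
    refine Fin.lastCases ?_ ?_ i
    · simp [ht]
    · intro j; simp [hc j]
  · intro i
    refine Fin.lastCases ?_ ?_ i
    · simp [hr]
    · intro j; simp [hv j]
  · rw [Fin.sum_univ_castSucc]
    simp [hsum]

lemma inner_conicalHull_nonpos {n : ℕ} {p : EuclideanSpace ℝ (Fin n)}
    {s : Set (EuclideanSpace ℝ (Fin n))} (hs : ∀ r ∈ s, ⟪p, r⟫ ≤ 0) {d}
    (hd : d ∈ conicalHull s) : ⟪p, d⟫ ≤ 0 := by
  obtain ⟨k, c, v, hc, hv, rfl⟩ := hd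
  rw [inner_sum]
  refine Finset.sum_nonpos fun i _ => ?_
  rw [real_inner_smul_right]
  exact mul_nonpos_of_nonneg_of_nonpos (hc i) (hs _ (hv i))

/-- Sticky-face-type lemma for a Motzkin-decomposable set `K = C + cone(R)`
with polyhedral recession cone: if `F` is the nonempty `π`-face of `K` with
`σ_K(π) < ∞`, then for every `δ > 0` there is `ε > 0` such that for all `π'`
with `‖π' - π‖ < ε` one has `σ_K(π') = σ_{F_δ}(π')`, where
`F_δ = {x ∈ K : ∃ x' ∈ F, ‖x - x'‖ ≤ δ}`. -/
theorem motzkin_sticky_neighborhood (n : ℕ)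
    (C K : Set (EuclideanSpace ℝ (Fin n)))
    (hCcompact : IsCompact C) (hCconv : Convex ℝ C) (hCne : C.Nonempty)
    (R : Finset (EuclideanSpace ℝ (Fin n)))
    (hK : K = C + conicalHull (R : Set (EuclideanSpace ℝ (Fin n))))
    (π : EuclideanSpace ℝ (Fin n))
    (hfin : suppFn π K ≠ ⊤)
    (F : Set (EuclideanSpace ℝ (Fin n)))
    (hF : F = {x ∈ K | ((⟪π, x⟫ : ℝ) : EReal) = suppFn π K})
    (hFne : F.Nonempty)
    (δ : ℝ) (hδ : 0 < δ) :
    ∃ ε > (0 : ℝ), ∀ π' : EuclideanSpace ℝ (Fin n), ‖π' - π‖ < ε →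
      suppFn π' K = suppFn π' {x ∈ K | ∃ x' ∈ F, ‖x - x'‖ ≤ δ} := by
  classical
  set Fδ : Set (EuclideanSpace ℝ (Fin n)) := {x ∈ K | ∃ x' ∈ F, ‖x - x'‖ ≤ δ} with hFδ
  -- C ⊆ K
  have hCK : C ⊆ K := by
    intro c hc
    rw [hK]
    simpa using Set.add_mem_add hc (zero_mem_conicalHull (R : Set (EuclideanSpace ℝ (Fin n))))
  have hFK : F ⊆ K := by rw [hF]; exact fun x hx => hx.1
  have hFFδ : F ⊆ Fδ := fun x hx => ⟨hFK hx, x, hx, by simp [hδ.le]⟩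
  -- rays are nonpositive against π
  have hπr : ∀ r ∈ R, ⟪π, r⟫ ≤ 0 := by
    intro r hr
    by_contra h
    push_neg at h
    obtain ⟨c, hc⟩ := hCne
    refine hfin (suppFn_eq_top π K fun M => ?_)
    refine ⟨c + ((max 0 ((M - ⟪π, c⟫)/⟪π, r⟫) + 1) • r), ?_, ?_⟩
    · rw [hK]
      refine Set.add_mem_add hc ?_
      have := add_smul_mem_conicalHull (zero_mem_conicalHull (R : Set (EuclideanSpace ℝ (Fin n))))
        (by exact_mod_cast hr) (t := max 0 ((M - ⟪π, c⟫)/⟪π, r⟫) + 1)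
        (by positivity)
      simpa using this
    · rw [inner_add_right, real_inner_smul_right]
      have h1 : (M - ⟪π, c⟫)/⟪π, r⟫ ≤ max 0 ((M - ⟪π, c⟫)/⟪π, r⟫) := le_max_right _ _
      have h2 : ((M - ⟪π, c⟫)/⟪π, r⟫) * ⟪π, r⟫ = M - ⟪π, c⟫ := div_mul_cancel₀ _ (ne_of_gt h)
      nlinarith [mul_le_mul_of_nonneg_right h1 h.le]
  -- maximizer of π over C
  have hcont : ∀ p : EuclideanSpace ℝ (Fin n),
      Continuous fun x : EuclideanSpace ℝ (Fin n) => ⟪p, x⟫ :=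
    fun p => continuous_const.inner continuous_id
  obtain ⟨cm, hcmC, hcm⟩ := hCcompact.exists_isMaxOn hCne ((hcont π).continuousOn)
  set σ : ℝ := ⟪π, cm⟫ with hσ
  have hcm' : ∀ x ∈ C, ⟪π, x⟫ ≤ σ := fun x hx => hcm hx
  -- value of suppFn π K
  have hle_of_memK : ∀ p : EuclideanSpace ℝ (Fin n), (∀ r ∈ R, ⟪p, r⟫ ≤ 0) →
      ∀ b : EuclideanSpace ℝ (Fin n), (∀ c ∈ C, ⟪p, c⟫ ≤ ⟪p, b⟫) →
      ∀ x ∈ K, ⟪p, x⟫ ≤ ⟪p, b⟫ := by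
    intro p hp b hb x hx
    rw [hK, Set.mem_add] at hx
    obtain ⟨c, hc, d, hd, rfl⟩ := hx
    have h1 : ⟪p, d⟫ ≤ 0 := inner_conicalHull_nonpos (by simpa using hp) hd
    have h2 := hb c hc
    rw [inner_add_right]
    linarith
  have hKσ : suppFn π K = ((σ : ℝ) : EReal) := by
    refine le_antisymm ?_ (le_suppFn π (hCK hcmC))
    rw [suppFn_le_iff]
    intro x hx
    exact_mod_cast hle_of_memK π hπr cm (fun c hc => hcm' c hc) x hx
  have hFmem : ∀ x, x ∈ F ↔ x ∈ K ∧ ⟪π, x⟫ = σ := by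
    intro x
    rw [hF, Set.mem_setOf_eq, hKσ]
    exact and_congr_right fun _ => EReal.coe_eq_coe_iff
  -- a point of F inside C
  obtain ⟨x₀, hx₀F⟩ := hFne
  have hx₀K : x₀ ∈ K := hFK hx₀F
  obtain ⟨c₀, hc₀C, d₀, hd₀, hx₀eq⟩ : ∃ c ∈ C,
      ∃ d ∈ conicalHull (R : Set (EuclideanSpace ℝ (Fin n))), c + d = x₀ := by
    have := hx₀K; rw [hK, Set.mem_add] at this; exact this
  have hπx₀ : ⟪π, x₀⟫ = σ := ((hFmem x₀).1 hx₀F).2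
  have hπd₀ : ⟪π, d₀⟫ ≤ 0 := inner_conicalHull_nonpos (by simpa using hπr) hd₀
  have hπc₀ : ⟪π, c₀⟫ = σ := by
    have h1 : ⟪π, c₀⟫ ≤ σ := hcm' _ hc₀C
    have : ⟪π, c₀⟫ + ⟪π, d₀⟫ = σ := by rw [← inner_add_right, hx₀eq, hπx₀]
    linarith
  have hc₀F : c₀ ∈ F := (hFmem c₀).2 ⟨hCK hc₀C, hπc₀⟩
  -- the compact set A of points of C far from F
  set A : Set (EuclideanSpace ℝ (Fin n)) := {x ∈ C | δ ≤ Metric.infDist x F} with hA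
  have hAcomp : IsCompact A := by
    refine hCcompact.inter_right ?_
    exact isClosed_le continuous_const (Metric.continuous_infDist_pt F)
  obtain ⟨η, hηpos, hηA⟩ : ∃ η > (0:ℝ), ∀ x ∈ A, ⟪π, x⟫ ≤ σ - η := by
    rcases Set.eq_empty_or_nonempty A with hAe | hAne
    · exact ⟨1, one_pos, fun x hx => by rw [hAe] at hx; exact absurd hx (Set.notMem_empty x)⟩
    · obtain ⟨a, haA, ha⟩ := hAcomp.exists_isMaxOn hAne ((hcont π).continuousOn)
      have ha' : ∀ x ∈ A, ⟪π, x⟫ ≤ ⟪π, a⟫ := fun x hx => ha hx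
      have haC : a ∈ C := haA.1
      have h1 : ⟪π, a⟫ < σ := by
        rcases lt_or_eq_of_le (hcm' a haC) with h | h
        · exact h
        · exfalso
          have haF : a ∈ F := (hFmem a).2 ⟨hCK haC, h⟩
          have hz : Metric.infDist a F = 0 := Metric.infDist_zero_of_mem haF
          have h2 := haA.2
          rw [hz] at h2
          linarith
      exact ⟨σ - ⟪π, a⟫, by linarith, fun x hx => by linarith [ha' x hx]⟩
  -- bound on C
  obtain ⟨M₀, hM₀⟩ := hCcompact.isBounded.exists_norm_le
  set M : ℝ := max M₀ 0 with hM
  have hMnn : 0 ≤ M := le_max_right _ _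
  have hMC : ∀ x ∈ C, ‖x‖ ≤ M := fun x hx => (hM₀ x hx).trans (le_max_left _ _)
  -- eventual conditions near π
  have h1 : ∀ᶠ π' in nhds π, ∀ r ∈ R, ⟪π, r⟫ < 0 → ⟪π', r⟫ < 0 := by
    rw [Filter.eventually_all_finset]
    intro r hr
    by_cases h : ⟪π, r⟫ < 0
    · have hc : Continuous fun π' : EuclideanSpace ℝ (Fin n) => ⟪π', r⟫ :=
        continuous_id.inner continuous_const
      filter_upwards [(hc.tendsto π).eventually_lt_const h] with π' h' _ using h'
    · exact Filter.Eventually.of_forall fun π' h' => absurd h' h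
  have h2 : ∀ᶠ π' in nhds π, ‖π' - π‖ * (2 * M) < η := by
    have hc : Continuous fun π' : EuclideanSpace ℝ (Fin n) => ‖π' - π‖ * (2 * M) :=
      ((continuous_id.sub continuous_const).norm).mul continuous_const
    have ht := hc.tendsto π
    simp only [sub_self, norm_zero, zero_mul] at ht
    exact ht.eventually_lt_const hηpos
  have hev := h1.and h2
  rw [Metric.eventually_nhds_iff] at hev
  obtain ⟨ε, hεpos, hball⟩ := hev
  refine ⟨ε, hεpos, fun π' hπ' => ?_⟩
  obtain ⟨hQ1, hQ2⟩ := hball (show dist π' π < ε by rwa [dist_eq_norm])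
  by_cases hpos : ∃ r ∈ R, 0 < ⟪π', r⟫
  · -- unbounded case: both sides ⊤
    obtain ⟨r, hrR, hr'⟩ := hpos
    have hr0 : ⟪π, r⟫ = 0 := by
      rcases lt_or_eq_of_le (hπr r hrR) with h | h
      · exact absurd (hQ1 r hrR h) (by linarith)
      · exact h
    have hmemF : ∀ t : ℝ, 0 ≤ t → x₀ + t • r ∈ F := by
      intro t ht
      refine (hFmem _).2 ⟨?_, ?_⟩
      · rw [hK, Set.mem_add]
        refine ⟨c₀, hc₀C, d₀ + t • r,
          add_smul_mem_conicalHull hd₀ (by exact_mod_cast hrR) ht, ?_⟩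
        rw [← hx₀eq]; abel
      · rw [inner_add_right, real_inner_smul_right, hr0, hπx₀]; ring
    have htop : ∀ S : Set (EuclideanSpace ℝ (Fin n)),
        (∀ t : ℝ, 0 ≤ t → x₀ + t • r ∈ S) → suppFn π' S = ⊤ := by
      intro S hS
      refine suppFn_eq_top π' S fun b => ?_
      set t : ℝ := max 0 ((b - ⟪π', x₀⟫)/⟪π', r⟫ + 1) with htdef
      refine ⟨x₀ + t • r, hS t (le_max_left _ _), ?_⟩
      rw [inner_add_right, real_inner_smul_right]
      have ha1 : (b - ⟪π', x₀⟫)/⟪π', r⟫ + 1 ≤ t := le_max_right _ _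
      have ha2 : ((b - ⟪π', x₀⟫)/⟪π', r⟫) * ⟪π', r⟫ = b - ⟪π', x₀⟫ :=
        div_mul_cancel₀ _ (ne_of_gt hr')
      nlinarith [mul_le_mul_of_nonneg_right ha1 hr'.le]
    rw [htop K (fun t ht => hFK (hmemF t ht)), htop Fδ (fun t ht => hFFδ (hmemF t ht))]
  · -- bounded case
    push_neg at hpos
    obtain ⟨cm', hcm'C, hcmm⟩ := hCcompact.exists_isMaxOn hCne ((hcont π').continuousOn)
    have hcmm' : ∀ x ∈ C, ⟪π', x⟫ ≤ ⟪π', cm'⟫ := fun x hx => hcmm hx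
    have hcm'Fδ : cm' ∈ Fδ := by
      by_contra hnot
      have hcm'A : cm' ∈ A := by
        refine ⟨hcm'C, ?_⟩
        by_contra hlt
        push_neg at hlt
        obtain ⟨x', hx'F, hx'd⟩ := (Metric.infDist_lt_iff ⟨x₀, hx₀F⟩).1 hlt
        exact hnot ⟨hCK hcm'C, x', hx'F, by rw [← dist_eq_norm]; exact hx'd.le⟩
      have e1 : ⟪π, cm'⟫ ≤ σ - η := hηA cm' hcm'A
      have e2 : ⟪π' - π, cm'⟫ ≤ ‖π' - π‖ * M := by
        calc ⟪π' - π, cm'⟫ ≤ ‖π' - π‖ * ‖cm'‖ := real_inner_le_norm _ _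
        _ ≤ ‖π' - π‖ * M := mul_le_mul_of_nonneg_left (hMC _ hcm'C) (norm_nonneg _)
      have e3 : ⟪π - π', c₀⟫ ≤ ‖π' - π‖ * M := by
        calc ⟪π - π', c₀⟫ ≤ ‖π - π'‖ * ‖c₀‖ := real_inner_le_norm _ _
        _ ≤ ‖π' - π‖ * M := by
          rw [norm_sub_rev]
          exact mul_le_mul_of_nonneg_left (hMC _ hc₀C) (norm_nonneg _)
      have e4 : ⟪π', c₀⟫ ≤ ⟪π', cm'⟫ := hcmm' c₀ hc₀C
      have e5 : ⟪π' - π, cm'⟫ = ⟪π', cm'⟫ - ⟪π, cm'⟫ := inner_sub_left _ _ _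
      have e6 : ⟪π - π', c₀⟫ = ⟪π, c₀⟫ - ⟪π', c₀⟫ := inner_sub_left _ _ _
      linarith [hπc₀, hQ2]
    refine le_antisymm ?_ (suppFn_mono π' (fun x hx => hx.1))
    rw [suppFn_le_iff]
    intro x hx
    have hb := hle_of_memK π' hpos cm' hcmm' x hx
    calc ((⟪π', x⟫ : ℝ) : EReal) ≤ ((⟪π', cm'⟫ : ℝ) : EReal) := by exact_mod_cast hb
    _ ≤ suppFn π' Fδ := le_suppFn π' hcm'Fδ
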